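/- For k ≥ 4 and m ≥ 3, the graph Γ on Δ^k (Δ = {0,...,m-1}) in which two tuples are adjacent iff they differ in exactly 2 coordinates is not 2-geodesic transitive: the triples (u,v,w₁) and (u,v,w₂), where u = (0,0,0,0,0,...,0), v = (1,1,0,0,0,...,0), w₁ = (1,2,0,1,0,...,0), w₂ = (1,1,1,1,0,...,0), are both 2-geodesics starting with the same arc (u,v), but no automorphism fixing u and v maps w₁ to w₂. -/

import Mathlib

/-- Two tuples differ in exactly two coordinates. -/
def diffTwo {k m : ℕ} (u v : Fin k → Fin m) : Prop :=
  ∃ i j : Fin k, i ≠ j ∧ u i ≠ v i ∧ u j ≠ v j ∧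
    ∀ l : Fin k, l ≠ i → l ≠ j → u l = v l

/-- The graph on `Δ^k` with adjacency "differ in exactly 2 coordinates". -/
def gridGraph (k m : ℕ) : SimpleGraph (Fin k → Fin m) where
  Adj u v := diffTwo u v
  symm := ⟨fun u v ⟨i, j, hij, hi, hj, h⟩ =>
    ⟨i, j, hij, hi.symm, hj.symm, fun l h1 h2 => (h l h1 h2).symm⟩⟩
  loopless := ⟨fun u ⟨i, _, _, hi, _, _⟩ => hi rfl⟩

lemma adj_elim {k m : ℕ} {a b : Fin k → Fin m} (h : (gridGraph k m).Adj a b) :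
    ∃ i j, i ≠ j ∧ a i ≠ b i ∧ a j ≠ b j ∧ ∀ l, l ≠ i → l ≠ j → a l = b l := h

lemma adj_of_two {k m : ℕ} {a b : Fin k → Fin m} {p q : Fin k}
    (hpq : p ≠ q) (h1 : a p ≠ b p) (h2 : a q ≠ b q)
    (h3 : ∀ l, l ≠ p → l ≠ q → a l = b l) : (gridGraph k m).Adj a b :=
  ⟨p, q, hpq, h1, h2, h3⟩

lemma mem2 {k m : ℕ} {a b : Fin k → Fin m} {i j : Fin k}
    (hout : ∀ l, l ≠ i → l ≠ j → a l = b l) {p : Fin k} (hp : a p ≠ b p) :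
    p = i ∨ p = j := by
  by_contra hc; push_neg at hc; exact hp (hout p hc.1 hc.2)

lemma adj_no_three {k m : ℕ} {a b : Fin k → Fin m} (h : (gridGraph k m).Adj a b)
    {p q r : Fin k} (hpq : p ≠ q) (hpr : p ≠ r) (hqr : q ≠ r)
    (h1 : a p ≠ b p) (h2 : a q ≠ b q) (h3 : a r ≠ b r) : False := by
  obtain ⟨i, j, hij, hi, hj, hout⟩ := adj_elim h
  have h1' := mem2 hout h1
  have h2' := mem2 hout h2
  have h3' := mem2 hout h3
  rcases h1' with rfl | rfl <;> rcases h2' with rfl | rfl <;>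
    rcases h3' with rfl | rfl <;> simp_all

lemma adj_exact {k m : ℕ} {a b : Fin k → Fin m} (h : (gridGraph k m).Adj a b)
    {p q : Fin k} (hpq : p ≠ q) (h1 : a p ≠ b p) (h2 : a q ≠ b q) :
    ∀ l, l ≠ p → l ≠ q → a l = b l := by
  obtain ⟨i, j, hij, hi, hj, hout⟩ := adj_elim h
  have h1' := mem2 hout h1
  have h2' := mem2 hout h2
  intro l hlp hlq
  by_contra hne
  have h3' := mem2 hout hne
  rcases h1' with rfl | rfl <;> rcases h2' with rfl | rfl <;>
    rcases h3' with rfl | rfl <;> simp_all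

lemma adj_not_sub {k m : ℕ} {a b : Fin k → Fin m} (h : (gridGraph k m).Adj a b)
    (e : Fin k) (hs : ∀ l, l ≠ e → a l = b l) : False := by
  obtain ⟨i, j, hij, hi, hj, _⟩ := adj_elim h
  have h1 : i = e := by by_contra hc; exact hi (hs i hc)
  have h2 : j = e := by by_contra hc; exact hj (hs j hc)
  exact hij (h1.trans h2.symm)

def typProp {k m : ℕ} (e0 e1 e3 : Fin k) (z0 z1 wz : Fin m)
    (x : Fin k → Fin m) : Prop :=
  (x e0 = z1 ∧ x e1 = z0 ∧ x e3 ≠ z0 ∧ x e3 ≠ z1 ∧ ∀ l, l ≠ e0 → l ≠ e3 → x l = z0)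
  ∨ (x e0 = z0 ∧ x e1 = z1 ∧ x e3 = z1 ∧ ∀ l, l ≠ e1 → l ≠ e3 → x l = z0)
  ∨ (x e0 ≠ z0 ∧ x e0 ≠ z1 ∧ x e1 = wz ∧ ∀ l, l ≠ e0 → l ≠ e1 → x l = z0)

lemma char_lemma {k m : ℕ} {e0 e1 e3 : Fin k} {z0 z1 : Fin m}
    (he01 : e0 ≠ e1) (he03 : e0 ≠ e3) (he13 : e1 ≠ e3)
    (hz01 : z0 ≠ z1)
    {u v w x : Fin k → Fin m}
    (hu : ∀ l, u l = z0)
    (hv0 : v e0 = z1) (hv1 : v e1 = z1) (hv : ∀ l, l ≠ e0 → l ≠ e1 → v l = z0)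
    (hw0 : w e0 = z1) (hw1 : w e1 ≠ z0) (hw1' : w e1 ≠ z1) (hw3 : w e3 = z1)
    (hw : ∀ l, l ≠ e0 → l ≠ e1 → l ≠ e3 → w l = z0)
    (hux : (gridGraph k m).Adj u x) (hvx : (gridGraph k m).Adj v x)
    (hwx : (gridGraph k m).Adj w x) :
    typProp e0 e1 e3 z0 z1 (w e1) x := by
  by_cases h0 : x e0 = z0 <;> by_cases h1 : x e1 = z0
  · -- Case D: impossible
    exfalso
    obtain ⟨i, j, hij, hi, hj, hout⟩ := adj_elim hux
    -- i, j are the nonzero coords of x; neither is e0 nor e1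
    have hxne : ∀ p : Fin k, x p ≠ z0 → p = i ∨ p = j := by
      intro p hp
      refine mem2 hout ?_
      rw [hu p]; exact fun h => hp h.symm
    have hie0 : i ≠ e0 := by rintro rfl; rw [hu i] at hi; exact hi h0.symm
    have hie1 : i ≠ e1 := by rintro rfl; rw [hu i] at hi; exact hi h1.symm
    refine adj_no_three hvx he01 (Ne.symm hie0) (Ne.symm hie1) ?_ ?_ ?_
    · rw [hv0, h0]; exact hz01.symm
    · rw [hv1, h1]; exact hz01.symm
    · rw [hv i hie0 hie1]
      rw [hu i] at hi
      exact hi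
  -- Case C : x e0 = z0, x e1 ≠ z0 : T2
  · obtain ⟨i, j, hij, hi, hj, hout⟩ := adj_elim hux
    obtain ⟨b, hbe1, hbx⟩ : ∃ b, b ≠ e1 ∧ x b ≠ z0 := by
      by_cases hie : i = e1
      · exact ⟨j, fun h => hij (hie.trans h.symm),
          fun h => hj ((hu j).trans h.symm)⟩
      · exact ⟨i, hie, fun h => hi ((hu i).trans h.symm)⟩
    have hbe0 : b ≠ e0 := fun h => hbx (by rw [h]; exact h0)
    have houtu : ∀ l, l ≠ e1 → l ≠ b → x l = z0 := by
      intro l hl1 hlb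
      have := adj_exact hux hbe1.symm
        (by rw [hu e1]; exact fun h => h1 h.symm)
        (by rw [hu b]; exact fun h => hbx h.symm) l hl1 hlb
      rw [← this, hu l]
    have hx1 : x e1 = z1 := by
      by_contra hx1
      refine adj_no_three hvx he01 hbe0.symm hbe1.symm ?_ ?_ ?_
      · rw [hv0, h0]; exact hz01.symm
      · rw [hv1]; exact fun h => hx1 h.symm
      · rw [hv b hbe0 hbe1]; exact fun h => hbx h.symm
    have hbe3 : b = e3 := by
      by_contra hbe3
      refine adj_no_three hwx he01 hbe0.symm hbe1.symm ?_ ?_ ?_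
      · rw [hw0, h0]; exact hz01.symm
      · rw [hx1]; exact hw1'
      · rw [hw b hbe0 hbe1 hbe3]; exact fun h => hbx h.symm
    rw [hbe3] at hbx houtu
    have hx3 : x e3 = z1 := by
      by_contra hx3
      refine adj_no_three hwx he01 he03 he13 ?_ ?_ ?_
      · rw [hw0, h0]; exact hz01.symm
      · rw [hx1]; exact hw1'
      · rw [hw3]; exact fun h => hx3 h.symm
    exact Or.inr (Or.inl ⟨h0, hx1, hx3, houtu⟩)
  -- Case B : x e0 ≠ z0, x e1 = z0 : T1
  · obtain ⟨i, j, hij, hi, hj, hout⟩ := adj_elim hux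
    obtain ⟨b, hbe0, hbx⟩ : ∃ b, b ≠ e0 ∧ x b ≠ z0 := by
      by_cases hie : i = e0
      · exact ⟨j, fun h => hij (hie.trans h.symm),
          fun h => hj ((hu j).trans h.symm)⟩
      · exact ⟨i, hie, fun h => hi ((hu i).trans h.symm)⟩
    have hbe1 : b ≠ e1 := fun h => hbx (by rw [h]; exact h1)
    have houtu : ∀ l, l ≠ e0 → l ≠ b → x l = z0 := by
      intro l hl0 hlb
      have := adj_exact hux hbe0.symm
        (by rw [hu e0]; exact fun h => h0 h.symm)
        (by rw [hu b]; exact fun h => hbx h.symm) l hl0 hlb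
      rw [← this, hu l]
    have hx0 : x e0 = z1 := by
      by_contra hx0
      refine adj_no_three hvx he01 hbe0.symm hbe1.symm ?_ ?_ ?_
      · rw [hv0]; exact fun h => hx0 h.symm
      · rw [hv1, h1]; exact hz01.symm
      · rw [hv b hbe0 hbe1]; exact fun h => hbx h.symm
    have hbe3 : b = e3 := by
      by_contra hbe3
      have hx3 : x e3 = z0 := houtu e3 he03.symm (fun h => hbe3 h.symm)
      refine adj_no_three hwx he13 hbe1.symm (fun h => hbe3 h.symm) ?_ ?_ ?_
      · rw [h1]; exact hw1
      · rw [hw3, hx3]; exact hz01.symm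
      · rw [hw b hbe0 hbe1 hbe3]; exact fun h => hbx h.symm
    rw [hbe3] at hbx houtu
    have hx3' : x e3 ≠ z1 := by
      intro hx3
      refine adj_not_sub hwx e1 ?_
      intro l hl1
      by_cases hl0 : l = e0
      · rw [hl0, hw0, hx0]
      · by_cases hl3 : l = e3
        · rw [hl3, hw3, hx3]
        · rw [hw l hl0 hl1 hl3, houtu l hl0 hl3]
    exact Or.inl ⟨hx0, h1, hbx, hx3', houtu⟩
  -- Case A : x e0 ≠ z0, x e1 ≠ z0 : T3
  · have houtu : ∀ l, l ≠ e0 → l ≠ e1 → x l = z0 := by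
      intro l hl0 hl1
      have := adj_exact hux he01
        (by rw [hu e0]; exact fun h => h0 h.symm)
        (by rw [hu e1]; exact fun h => h1 h.symm) l hl0 hl1
      rw [← this, hu l]
    have hx0' : x e0 ≠ z1 := by
      intro hx0
      refine adj_not_sub hvx e1 ?_
      intro l hl1
      by_cases hl0 : l = e0
      · rw [hl0, hv0, hx0]
      · rw [hv l hl0 hl1, houtu l hl0 hl1]
    have hx1 : x e1 = w e1 := by
      by_contra hx1
      refine adj_no_three hwx he01 he03 he13 ?_ ?_ ?_
      · rw [hw0]; exact fun h => hx0' h.symm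
      · exact fun h => hx1 h.symm
      · rw [hw3, houtu e3 he03.symm he13.symm]; exact hz01.symm
    exact Or.inr (Or.inr ⟨h0, hx0', hx1, houtu⟩)

lemma nonadj {k m : ℕ} {e0 e1 e3 : Fin k} {z0 z1 wz : Fin m}
    (he01 : e0 ≠ e1) (he03 : e0 ≠ e3) (he13 : e1 ≠ e3)
    (hz01 : z0 ≠ z1) (hwz0 : wz ≠ z0) (hwz1 : wz ≠ z1)
    {x y : Fin k → Fin m}
    (hx : typProp e0 e1 e3 z0 z1 wz x) (hy : typProp e0 e1 e3 z0 z1 wz y)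
    (hxy : (gridGraph k m).Adj x y) : False := by
  rcases hx with ⟨hx0, hx1, hx3, hx3', hxo⟩ | ⟨hx0, hx1, hx3, hxo⟩ |
      ⟨hx0, hx0', hx1, hxo⟩ <;>
    rcases hy with ⟨hy0, hy1, hy3, hy3', hyo⟩ | ⟨hy0, hy1, hy3, hyo⟩ |
      ⟨hy0, hy0', hy1, hyo⟩
  · -- T1 T1 : differ only possibly at e3
    refine adj_not_sub hxy e3 (fun l hl3 => ?_)
    by_cases hl0 : l = e0
    · rw [hl0, hx0, hy0]
    · rw [hxo l hl0 hl3, hyo l hl0 hl3]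
  · -- T1 T2 : differ at e0 e1 e3
    refine adj_no_three hxy he01 he03 he13 ?_ ?_ ?_
    · rw [hx0, hy0]; exact hz01.symm
    · rw [hx1, hy1]; exact hz01
    · rw [hy3]; exact hx3'
  · -- T1 T3
    refine adj_no_three hxy he01 he03 he13 ?_ ?_ ?_
    · rw [hx0]; exact fun h => hy0' h.symm
    · rw [hx1, hy1]; exact fun h => hwz0 h.symm
    · rw [hyo e3 he03.symm he13.symm]; exact hx3
  · -- T2 T1
    refine adj_no_three hxy he01 he03 he13 ?_ ?_ ?_
    · rw [hx0, hy0]; exact hz01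
    · rw [hx1, hy1]; exact hz01.symm
    · rw [hx3]; exact fun h => hy3' h.symm
  · -- T2 T2 : equal
    refine adj_not_sub hxy e3 (fun l hl3 => ?_)
    by_cases hl1 : l = e1
    · rw [hl1, hx1, hy1]
    · rw [hxo l hl1 hl3, hyo l hl1 hl3]
  · -- T2 T3
    refine adj_no_three hxy he01 he03 he13 ?_ ?_ ?_
    · rw [hx0]; exact fun h => hy0 h.symm
    · rw [hx1, hy1]; exact fun h => hwz1 h.symm
    · rw [hx3, hyo e3 he03.symm he13.symm]; exact hz01.symm
  · -- T3 T1
    refine adj_no_three hxy he01 he03 he13 ?_ ?_ ?_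
    · rw [hy0]; exact hx0'
    · rw [hx1, hy1]; exact hwz0
    · rw [hxo e3 he03.symm he13.symm]; exact fun h => hy3 h.symm
  · -- T3 T2
    refine adj_no_three hxy he01 he03 he13 ?_ ?_ ?_
    · rw [hy0]; exact hx0
    · rw [hx1, hy1]; exact hwz1
    · rw [hxo e3 he03.symm he13.symm, hy3]; exact hz01
  · -- T3 T3 : differ only possibly at e0
    refine adj_not_sub hxy e0 (fun l hl0 => ?_)
    by_cases hl1 : l = e1
    · rw [hl1, hx1, hy1]
    · rw [hxo l hl0 hl1, hyo l hl0 hl1]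

/-- For `k ≥ 4`, `m ≥ 3`, the graph on `Δ^k` (adjacency: differ in exactly 2
coordinates) is not 2-geodesic transitive: `(u,v,w₁)` and `(u,v,w₂)` are
2-geodesics starting with the same arc, but no automorphism fixing `u` and `v`
maps `w₁` to `w₂`. -/
theorem stmt_7 (k m : ℕ) (hk : 4 ≤ k) (hm : 3 ≤ m) :
    let z0 : Fin m := ⟨0, by omega⟩
    let z1 : Fin m := ⟨1, by omega⟩
    let z2 : Fin m := ⟨2, by omega⟩
    let u : Fin k → Fin m := fun _ => z0
    let v : Fin k → Fin m := fun i => if i.val = 0 ∨ i.val = 1 then z1 else z0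
    let w₁ : Fin k → Fin m := fun i =>
      if i.val = 0 then z1 else if i.val = 1 then z2 else
        if i.val = 3 then z1 else z0
    let w₂ : Fin k → Fin m := fun i => if i.val ≤ 3 then z1 else z0
    ((gridGraph k m).Adj u v ∧ (gridGraph k m).Adj v w₁ ∧
      u ≠ w₁ ∧ ¬ (gridGraph k m).Adj u w₁) ∧
    ((gridGraph k m).Adj v w₂ ∧ u ≠ w₂ ∧ ¬ (gridGraph k m).Adj u w₂) ∧
    ¬ ∃ g : gridGraph k m ≃g gridGraph k m,
        g u = u ∧ g v = v ∧ g w₁ = w₂ := by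
  intro z0 z1 z2 u v w₁ w₂
  have hz0 : z0.val = 0 := rfl
  have hz1 : z1.val = 1 := rfl
  have hz2 : z2.val = 2 := rfl
  have hu : ∀ l, u l = z0 := fun _ => rfl
  have hv : ∀ l : Fin k, v l = if l.val = 0 ∨ l.val = 1 then z1 else z0 :=
    fun _ => rfl
  have hw₁v : ∀ l : Fin k, w₁ l = if l.val = 0 then z1 else if l.val = 1 then z2
      else if l.val = 3 then z1 else z0 := fun _ => rfl
  have hw₂v : ∀ l : Fin k, w₂ l = if l.val ≤ 3 then z1 else z0 := fun _ => rfl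
  obtain ⟨e0, he0⟩ : ∃ e : Fin k, e.val = 0 := ⟨⟨0, by omega⟩, rfl⟩
  obtain ⟨e1, he1⟩ : ∃ e : Fin k, e.val = 1 := ⟨⟨1, by omega⟩, rfl⟩
  obtain ⟨e2, he2⟩ : ∃ e : Fin k, e.val = 2 := ⟨⟨2, by omega⟩, rfl⟩
  obtain ⟨e3, he3⟩ : ∃ e : Fin k, e.val = 3 := ⟨⟨3, by omega⟩, rfl⟩
  have fne : ∀ {a b : Fin k}, a.val ≠ b.val → a ≠ b :=
    fun h hab => h (congrArg Fin.val hab)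
  have zne : ∀ {a b : Fin m}, a.val ≠ b.val → a ≠ b :=
    fun h hab => h (congrArg Fin.val hab)
  have hvne : ∀ (l e : Fin k), l ≠ e → l.val ≠ e.val :=
    fun l e h hv => h (Fin.val_injective hv)
  have he01 : e0 ≠ e1 := fne (by omega)
  have he02 : e0 ≠ e2 := fne (by omega)
  have he03 : e0 ≠ e3 := fne (by omega)
  have he12 : e1 ≠ e2 := fne (by omega)
  have he13 : e1 ≠ e3 := fne (by omega)
  have he23 : e2 ≠ e3 := fne (by omega)
  have hz01 : z0 ≠ z1 := zne (by omega)
  have hz02 : z0 ≠ z2 := zne (by omega)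
  have hz12 : z1 ≠ z2 := zne (by omega)
  -- values of v
  have hv0 : v e0 = z1 := by rw [hv, he0]; norm_num
  have hv1 : v e1 = z1 := by rw [hv, he1]; norm_num
  have hvout : ∀ l, l ≠ e0 → l ≠ e1 → v l = z0 := by
    intro l h0 h1
    have c0 := hvne l e0 h0; rw [he0] at c0
    have c1 := hvne l e1 h1; rw [he1] at c1
    rw [hv, if_neg (by omega)]
  -- values of w₁
  have hw₁0 : w₁ e0 = z1 := by rw [hw₁v, he0]; norm_num
  have hw₁1 : w₁ e1 = z2 := by rw [hw₁v, he1]; norm_num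
  have hw₁3 : w₁ e3 = z1 := by rw [hw₁v, he3]; norm_num
  have hw₁out : ∀ l, l ≠ e0 → l ≠ e1 → l ≠ e3 → w₁ l = z0 := by
    intro l h0 h1 h3
    have c0 := hvne l e0 h0; rw [he0] at c0
    have c1 := hvne l e1 h1; rw [he1] at c1
    have c3 := hvne l e3 h3; rw [he3] at c3
    rw [hw₁v, if_neg (by omega), if_neg (by omega), if_neg (by omega)]
  have hw₁1ne0 : w₁ e1 ≠ z0 := by rw [hw₁1]; exact hz02.symm
  have hw₁1ne1 : w₁ e1 ≠ z1 := by rw [hw₁1]; exact hz12.symm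
  -- values of w₂
  have hw₂0 : w₂ e0 = z1 := by rw [hw₂v, he0]; norm_num
  have hw₂1 : w₂ e1 = z1 := by rw [hw₂v, he1]; norm_num
  have hw₂2 : w₂ e2 = z1 := by rw [hw₂v, he2]; norm_num
  have hw₂3 : w₂ e3 = z1 := by rw [hw₂v, he3]; norm_num
  have hw₂out : ∀ l, l ≠ e0 → l ≠ e1 → l ≠ e2 → l ≠ e3 → w₂ l = z0 := by
    intro l h0 h1 h2 h3
    have c0 := hvne l e0 h0; rw [he0] at c0
    have c1 := hvne l e1 h1; rw [he1] at c1
    have c2 := hvne l e2 h2; rw [he2] at c2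
    have c3 := hvne l e3 h3; rw [he3] at c3
    rw [hw₂v, if_neg (by omega)]
  -- part 1
  have hadj_uv : (gridGraph k m).Adj u v := by
    refine adj_of_two he01 ?_ ?_ ?_
    · rw [hu e0, hv0]; exact hz01
    · rw [hu e1, hv1]; exact hz01
    · intro l h0 h1; rw [hu l, hvout l h0 h1]
  have hadj_vw₁ : (gridGraph k m).Adj v w₁ := by
    refine adj_of_two he13 ?_ ?_ ?_
    · rw [hv1, hw₁1]; exact hz12
    · rw [hvout e3 he03.symm he13.symm, hw₁3]; exact hz01
    · intro l h1 h3
      by_cases h0 : l = e0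
      · rw [h0, hv0, hw₁0]
      · rw [hvout l h0 h1, hw₁out l h0 h1 h3]
  have hne_uw₁ : u ≠ w₁ := by
    intro h
    have := congrFun h e0
    rw [hu e0, hw₁0] at this
    exact hz01 this
  have hnadj_uw₁ : ¬ (gridGraph k m).Adj u w₁ := by
    intro h
    refine adj_no_three h he01 he03 he13 ?_ ?_ ?_
    · rw [hu e0, hw₁0]; exact hz01
    · rw [hu e1, hw₁1]; exact hz02
    · rw [hu e3, hw₁3]; exact hz01
  -- part 2
  have hadj_vw₂ : (gridGraph k m).Adj v w₂ := by
    refine adj_of_two he23 ?_ ?_ ?_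
    · rw [hvout e2 he02.symm he12.symm, hw₂2]; exact hz01
    · rw [hvout e3 he03.symm he13.symm, hw₂3]; exact hz01
    · intro l h2 h3
      by_cases h0 : l = e0
      · rw [h0, hv0, hw₂0]
      · by_cases h1 : l = e1
        · rw [h1, hv1, hw₂1]
        · rw [hvout l h0 h1, hw₂out l h0 h1 h2 h3]
  have hne_uw₂ : u ≠ w₂ := by
    intro h
    have := congrFun h e0
    rw [hu e0, hw₂0] at this
    exact hz01 this
  have hnadj_uw₂ : ¬ (gridGraph k m).Adj u w₂ := by
    intro h
    refine adj_no_three h he01 he02 he12 ?_ ?_ ?_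
    · rw [hu e0, hw₂0]; exact hz01
    · rw [hu e1, hw₂1]; exact hz01
    · rw [hu e2, hw₂2]; exact hz01
  -- part 3
  have hfinal : ¬ ∃ g : gridGraph k m ≃g gridGraph k m,
      g u = u ∧ g v = v ∧ g w₁ = w₂ := by
    rintro ⟨g, hgu, hgv, hgw⟩
    -- the two witnesses
    obtain ⟨x2, hx2⟩ : ∃ f : Fin k → Fin m,
        ∀ l, f l = if l.val = 1 ∨ l.val = 3 then z1 else z0 := ⟨_, fun _ => rfl⟩
    obtain ⟨y2, hy2⟩ : ∃ f : Fin k → Fin m,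
        ∀ l, f l = if l.val = 1 ∨ l.val = 2 then z1 else z0 := ⟨_, fun _ => rfl⟩
    have hx20 : x2 e0 = z0 := by rw [hx2, he0]; norm_num
    have hx21 : x2 e1 = z1 := by rw [hx2, he1]; norm_num
    have hx22 : x2 e2 = z0 := by rw [hx2, he2]; norm_num
    have hx23 : x2 e3 = z1 := by rw [hx2, he3]; norm_num
    have hx2out : ∀ l, l ≠ e1 → l ≠ e3 → x2 l = z0 := by
      intro l h1 h3
      have c1 := hvne l e1 h1; rw [he1] at c1
      have c3 := hvne l e3 h3; rw [he3] at c3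
      rw [hx2, if_neg (by omega)]
    have hy20 : y2 e0 = z0 := by rw [hy2, he0]; norm_num
    have hy21 : y2 e1 = z1 := by rw [hy2, he1]; norm_num
    have hy22 : y2 e2 = z1 := by rw [hy2, he2]; norm_num
    have hy23 : y2 e3 = z0 := by rw [hy2, he3]; norm_num
    have hy2out : ∀ l, l ≠ e1 → l ≠ e2 → y2 l = z0 := by
      intro l h1 h2
      have c1 := hvne l e1 h1; rw [he1] at c1
      have c2 := hvne l e2 h2; rw [he2] at c2
      rw [hy2, if_neg (by omega)]
    -- adjacencies of the witnesses
    have hadj_ux2 : (gridGraph k m).Adj u x2 := by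
      refine adj_of_two he13 ?_ ?_ ?_
      · rw [hu e1, hx21]; exact hz01
      · rw [hu e3, hx23]; exact hz01
      · intro l h1 h3; rw [hu l, hx2out l h1 h3]
    have hadj_vx2 : (gridGraph k m).Adj v x2 := by
      refine adj_of_two he03 ?_ ?_ ?_
      · rw [hv0, hx20]; exact hz01.symm
      · rw [hvout e3 he03.symm he13.symm, hx23]; exact hz01
      · intro l h0 h3
        by_cases h1 : l = e1
        · rw [h1, hv1, hx21]
        · rw [hvout l h0 h1, hx2out l h1 h3]
    have hadj_w₂x2 : (gridGraph k m).Adj w₂ x2 := by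
      refine adj_of_two he02 ?_ ?_ ?_
      · rw [hw₂0, hx20]; exact hz01.symm
      · rw [hw₂2, hx22]; exact hz01.symm
      · intro l h0 h2
        by_cases h1 : l = e1
        · rw [h1, hw₂1, hx21]
        · by_cases h3 : l = e3
          · rw [h3, hw₂3, hx23]
          · rw [hw₂out l h0 h1 h2 h3, hx2out l h1 h3]
    have hadj_uy2 : (gridGraph k m).Adj u y2 := by
      refine adj_of_two he12 ?_ ?_ ?_
      · rw [hu e1, hy21]; exact hz01
      · rw [hu e2, hy22]; exact hz01
      · intro l h1 h2; rw [hu l, hy2out l h1 h2]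
    have hadj_vy2 : (gridGraph k m).Adj v y2 := by
      refine adj_of_two he02 ?_ ?_ ?_
      · rw [hv0, hy20]; exact hz01.symm
      · rw [hvout e2 he02.symm he12.symm, hy22]; exact hz01
      · intro l h0 h2
        by_cases h1 : l = e1
        · rw [h1, hv1, hy21]
        · rw [hvout l h0 h1, hy2out l h1 h2]
    have hadj_w₂y2 : (gridGraph k m).Adj w₂ y2 := by
      refine adj_of_two he03 ?_ ?_ ?_
      · rw [hw₂0, hy20]; exact hz01.symm
      · rw [hw₂3, hy23]; exact hz01.symm
      · intro l h0 h3
        by_cases h1 : l = e1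
        · rw [h1, hw₂1, hy21]
        · by_cases h2 : l = e2
          · rw [h2, hw₂2, hy22]
          · rw [hw₂out l h0 h1 h2 h3, hy2out l h1 h2]
    have hadj_x2y2 : (gridGraph k m).Adj x2 y2 := by
      refine adj_of_two he23 ?_ ?_ ?_
      · rw [hx22, hy22]; exact hz01
      · rw [hx23, hy23]; exact hz01.symm
      · intro l h2 h3
        by_cases h1 : l = e1
        · rw [h1, hx21, hy21]
        · rw [hx2out l h1 h3, hy2out l h1 h2]
    -- pull back through g.symm
    have hgu' : g.symm u = u := by
      have := g.symm_apply_apply u; rwa [hgu] at this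
    have hgv' : g.symm v = v := by
      have := g.symm_apply_apply v; rwa [hgv] at this
    have hgw' : g.symm w₂ = w₁ := by
      have := g.symm_apply_apply w₁; rwa [hgw] at this
    have map : ∀ {a b : Fin k → Fin m}, (gridGraph k m).Adj a b →
        (gridGraph k m).Adj (g.symm a) (g.symm b) :=
      fun h => g.symm.map_rel_iff.mpr h
    have hux' : (gridGraph k m).Adj u (g.symm x2) := by
      have := map hadj_ux2; rwa [hgu'] at this
    have hvx' : (gridGraph k m).Adj v (g.symm x2) := by
      have := map hadj_vx2; rwa [hgv'] at this
    have hwx' : (gridGraph k m).Adj w₁ (g.symm x2) := by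
      have := map hadj_w₂x2; rwa [hgw'] at this
    have huy' : (gridGraph k m).Adj u (g.symm y2) := by
      have := map hadj_uy2; rwa [hgu'] at this
    have hvy' : (gridGraph k m).Adj v (g.symm y2) := by
      have := map hadj_vy2; rwa [hgv'] at this
    have hwy' : (gridGraph k m).Adj w₁ (g.symm y2) := by
      have := map hadj_w₂y2; rwa [hgw'] at this
    have hx' := char_lemma he01 he03 he13 hz01 hu hv0 hv1 hvout hw₁0 hw₁1ne0
      hw₁1ne1 hw₁3 hw₁out hux' hvx' hwx'
    have hy' := char_lemma he01 he03 he13 hz01 hu hv0 hv1 hvout hw₁0 hw₁1ne0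
      hw₁1ne1 hw₁3 hw₁out huy' hvy' hwy'
    exact nonadj he01 he03 he13 hz01 hw₁1ne0 hw₁1ne1 hx' hy' (map hadj_x2y2)
  exact ⟨⟨hadj_uv, hadj_vw₁, hne_uw₁, hnadj_uw₁⟩,
    ⟨hadj_vw₂, hne_uw₂, hnadj_uw₂⟩, hfinal⟩
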